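/- Let (Ω,F,P) be a probability space, (E,𝔈) a measurable space, X, Xₙ : Ω → E measurable maps, and 𝔖 ⊆ 𝔈 a family of sets such that for every A ∈ 𝔈 and ε > 0 there exists S ∈ 𝔖 with P(X ∈ A Δ S) < ε. If (a) lim_{n→∞} P(X ∈ S and Xₙ ∉ S) = 0 for every S ∈ 𝔖, and (b) lim_{n→∞} P(Xₙ ∈ A) = P(X ∈ A) for every A ∈ 𝔈, then lim_{n→∞} P(X ∈ A and Xₙ ∉ A) = 0 for every A ∈ 𝔈. -/

import Mathlib

open MeasureTheory Filter Topology
open scoped ENNReal symmDiff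

theorem stmt0 {Ω E : Type*} [MeasurableSpace Ω] [MeasurableSpace E]
    (P : Measure Ω) [IsProbabilityMeasure P]
    (X : Ω → E) (Xn : ℕ → Ω → E)
    (hX : Measurable X) (hXn : ∀ n, Measurable (Xn n))
    (𝔖 : Set (Set E)) (h𝔖meas : ∀ S ∈ 𝔖, MeasurableSet S)
    (happrox : ∀ A : Set E, MeasurableSet A → ∀ ε : ℝ≥0∞, 0 < ε →
      ∃ S ∈ 𝔖, P (X ⁻¹' (symmDiff A S)) < ε)
    (ha : ∀ S ∈ 𝔖,
      Tendsto (fun n => P (X ⁻¹' S ∩ Xn n ⁻¹' Sᶜ)) atTop (𝓝 0))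
    (hb : ∀ A : Set E, MeasurableSet A →
      Tendsto (fun n => P (Xn n ⁻¹' A)) atTop (𝓝 (P (X ⁻¹' A)))) :
    ∀ A : Set E, MeasurableSet A →
      Tendsto (fun n => P (X ⁻¹' A ∩ Xn n ⁻¹' Aᶜ)) atTop (𝓝 0) := by
  intro A hA
  rw [ENNReal.tendsto_atTop_zero]
  intro ε hε
  have hε3 : 0 < ε / 3 := ENNReal.div_pos hε.ne' (by norm_num)
  obtain ⟨S, hS𝔖, hSapprox⟩ := happrox A hA (ε / 3) hε3
  have hSmeas := h𝔖meas S hS𝔖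
  -- eventually P(X ∈ S, Xn ∉ S) ≤ ε/3
  obtain ⟨N₁, hN₁⟩ := ENNReal.tendsto_atTop_zero.mp (ha S hS𝔖) (ε / 3) hε3
  -- P(X ∈ S \ A) < ε/3 since S \ A ⊆ A Δ S
  have hSA : P (X ⁻¹' (S \ A)) < ε / 3 :=
    lt_of_le_of_lt (measure_mono (Set.preimage_mono (by
      rw [Set.symmDiff_def]; exact Set.subset_union_right))) hSapprox
  have hAS : P (X ⁻¹' (A \ S)) ≤ ε / 3 :=
    le_of_lt (lt_of_le_of_lt (measure_mono (Set.preimage_mono (by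
      rw [Set.symmDiff_def]; exact Set.subset_union_left))) hSapprox)
  -- eventually P(Xn ∈ S \ A) < ε/3
  have htend := hb (S \ A) (hSmeas.diff hA)
  have hev : ∀ᶠ n in atTop, P (Xn n ⁻¹' (S \ A)) < ε / 3 :=
    htend.eventually (Filter.Tendsto.eventually_lt_const hSA tendsto_id)
  obtain ⟨N₂, hN₂⟩ := eventually_atTop.mp hev
  refine ⟨max N₁ N₂, fun n hn => ?_⟩
  have h1 := hN₁ n (le_trans (le_max_left _ _) hn)
  have h2 := le_of_lt (hN₂ n (le_trans (le_max_right _ _) hn))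
  -- set inclusion
  have hsub : X ⁻¹' A ∩ Xn n ⁻¹' Aᶜ ⊆
      X ⁻¹' (A \ S) ∪ (X ⁻¹' S ∩ Xn n ⁻¹' Sᶜ) ∪ Xn n ⁻¹' (S \ A) := by
    intro ω ⟨hωA, hωAc⟩
    by_cases hXS : X ω ∈ S
    · by_cases hXnS : Xn n ω ∈ S
      · exact Or.inr ⟨hXnS, hωAc⟩
      · exact Or.inl (Or.inr ⟨hXS, hXnS⟩)
    · exact Or.inl (Or.inl ⟨hωA, hXS⟩)
  calc P (X ⁻¹' A ∩ Xn n ⁻¹' Aᶜ)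
      ≤ P (X ⁻¹' (A \ S) ∪ (X ⁻¹' S ∩ Xn n ⁻¹' Sᶜ) ∪ Xn n ⁻¹' (S \ A)) :=
        measure_mono hsub
    _ ≤ P (X ⁻¹' (A \ S)) + P (X ⁻¹' S ∩ Xn n ⁻¹' Sᶜ) + P (Xn n ⁻¹' (S \ A)) :=
        le_trans (measure_union_le _ _) (add_le_add_left (measure_union_le _ _) _)
    _ ≤ ε / 3 + ε / 3 + ε / 3 := add_le_add (add_le_add hAS h1) h2
    _ = ε := ENNReal.add_thirds ε
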